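/- Let 0 < a < b, let ρ : [a,b] → ℝ be continuous with ρ ≥ 0, and let m₁, m₂ : [a,b] → ℝ be continuous with 0 ≤ m₁(r) ≤ m₂(r) and 2m₂(r) < r for all r ∈ [a,b]. Suppose P₁, P₂ : [a,b] → ℝ are differentiable, nonnegative, satisfy the TOV equations P_i′(r) = −(m_i(r)+4πr³P_i(r))·(ρ(r)+P_i(r))/(r(r−2m_i(r))) for i = 1,2 and all r ∈ (a,b), and satisfy P₁(b) = P₂(b). Then P₂(r) ≥ P₁(r) for all r ∈ [a,b]. -/

import Mathlib

open Real Set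

theorem tov_pressure_comparison
    (a b : ℝ) (ha : 0 < a) (hab : a < b)
    (ρ m₁ m₂ P₁ P₂ : ℝ → ℝ)
    (hρ_cont : ContinuousOn ρ (Icc a b))
    (hρ_nonneg : ∀ r ∈ Icc a b, 0 ≤ ρ r)
    (hm₁_cont : ContinuousOn m₁ (Icc a b))
    (hm₂_cont : ContinuousOn m₂ (Icc a b))
    (hm₁_nonneg : ∀ r ∈ Icc a b, 0 ≤ m₁ r)
    (hm_le : ∀ r ∈ Icc a b, m₁ r ≤ m₂ r)
    (hm₂_lt : ∀ r ∈ Icc a b, 2 * m₂ r < r)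
    (hP₁_cont : ContinuousOn P₁ (Icc a b))
    (hP₂_cont : ContinuousOn P₂ (Icc a b))
    (hP₁_nonneg : ∀ r ∈ Icc a b, 0 ≤ P₁ r)
    (hP₂_nonneg : ∀ r ∈ Icc a b, 0 ≤ P₂ r)
    (hTOV₁ : ∀ r ∈ Ioo a b,
      HasDerivAt P₁ (-(m₁ r + 4 * π * r ^ 3 * P₁ r) * (ρ r + P₁ r) / (r * (r - 2 * m₁ r))) r)
    (hTOV₂ : ∀ r ∈ Ioo a b,
      HasDerivAt P₂ (-(m₂ r + 4 * π * r ^ 3 * P₂ r) * (ρ r + P₂ r) / (r * (r - 2 * m₂ r))) r)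
    (hPb : P₁ b = P₂ b) :
    ∀ r ∈ Icc a b, P₁ r ≤ P₂ r := by
  -- positivity of denominators
  have hden₂ : ∀ r ∈ Icc a b, 0 < r - 2 * m₂ r := fun r hr => by
    have := hm₂_lt r hr; linarith
  have hden₁ : ∀ r ∈ Icc a b, 0 < r - 2 * m₁ r := fun r hr => by
    have h1 := hden₂ r hr; have h2 := hm_le r hr; linarith
  have hrpos : ∀ r ∈ Icc a b, 0 < r := fun r hr => lt_of_lt_of_le ha hr.1
  have hD₁pos : ∀ r ∈ Icc a b, 0 < r * (r - 2 * m₁ r) := fun r hr =>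
    mul_pos (hrpos r hr) (hden₁ r hr)
  have hD₂pos : ∀ r ∈ Icc a b, 0 < r * (r - 2 * m₂ r) := fun r hr =>
    mul_pos (hrpos r hr) (hden₂ r hr)
  -- the Lipschitz-type bound
  set h : ℝ → ℝ := fun r =>
    (m₁ r + 4 * π * r ^ 3 * (ρ r + P₁ r + P₂ r)) / (r * (r - 2 * m₁ r)) with hh_def
  have hh_cont : ContinuousOn h (Icc a b) := by
    apply ContinuousOn.div
    · exact hm₁_cont.add ((continuousOn_const.mul ((continuous_pow 3).continuousOn)).mul
        ((hρ_cont.add hP₁_cont).add hP₂_cont))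
    · exact continuousOn_id.mul (continuousOn_id.sub (continuousOn_const.mul hm₁_cont))
    · exact fun r hr => (hD₁pos r hr).ne'
  obtain ⟨z, hz, hzmax⟩ := isCompact_Icc.exists_isMaxOn (⟨a, left_mem_Icc.2 hab.le⟩ :
    (Icc a b).Nonempty) hh_cont
  set K : ℝ := h z with hK_def
  have hK : ∀ r ∈ Icc a b, h r ≤ K := fun r hr => hzmax hr
  -- the difference function
  set u : ℝ → ℝ := fun r => P₁ r - P₂ r with hu_def
  have hu_cont : ContinuousOn u (Icc a b) := hP₁_cont.sub hP₂_cont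
  have hub : u b = 0 := by simp [hu_def, hPb]
  -- key derivative inequality at points where u ≥ 0
  have key : ∀ r ∈ Ioo a b, 0 ≤ u r →
      0 ≤ K * u r +
        (-(m₁ r + 4 * π * r ^ 3 * P₁ r) * (ρ r + P₁ r) / (r * (r - 2 * m₁ r)) -
          -(m₂ r + 4 * π * r ^ 3 * P₂ r) * (ρ r + P₂ r) / (r * (r - 2 * m₂ r))) := by
    intro r hr hur
    have hr' : r ∈ Icc a b := Ioo_subset_Icc_self hr
    have hD₁ := hD₁pos r hr'
    have hD₂ := hD₂pos r hr'
    have hrp := hrpos r hr'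
    have hs : (0:ℝ) ≤ 4 * π * r ^ 3 := by positivity
    have hq := hP₂_nonneg r hr'
    have hp := hP₁_nonneg r hr'
    have hρr := hρ_nonneg r hr'
    have hm1 := hm₁_nonneg r hr'
    have hmle := hm_le r hr'
    -- step 1: monotonicity in m
    have step1 : (m₁ r + 4 * π * r ^ 3 * P₂ r) * (ρ r + P₂ r) / (r * (r - 2 * m₁ r)) ≤
        (m₂ r + 4 * π * r ^ 3 * P₂ r) * (ρ r + P₂ r) / (r * (r - 2 * m₂ r)) := by
      rw [div_le_div_iff₀ hD₁ hD₂]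
      nlinarith [mul_nonneg (mul_nonneg (mul_nonneg hrp.le (by linarith : (0:ℝ) ≤ ρ r + P₂ r))
        (by linarith : (0:ℝ) ≤ m₂ r - m₁ r))
        (by nlinarith : (0:ℝ) ≤ r + 2 * (4 * π * r ^ 3 * P₂ r))]
    have hKr : (m₁ r + 4 * π * r ^ 3 * (ρ r + P₁ r + P₂ r)) / (r * (r - 2 * m₁ r)) ≤ K :=
      hK r hr'
    have hur' : (0:ℝ) ≤ P₁ r - P₂ r := hur
    have step3 : (m₁ r + 4 * π * r ^ 3 * (ρ r + P₁ r + P₂ r)) / (r * (r - 2 * m₁ r)) *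
        (P₁ r - P₂ r) ≤ K * (P₁ r - P₂ r) :=
      mul_le_mul_of_nonneg_right hKr hur'
    have identity : (m₁ r + 4 * π * r ^ 3 * (ρ r + P₁ r + P₂ r)) / (r * (r - 2 * m₁ r)) *
        (P₁ r - P₂ r) +
        (-(m₁ r + 4 * π * r ^ 3 * P₁ r) * (ρ r + P₁ r) / (r * (r - 2 * m₁ r)) -
          -(m₂ r + 4 * π * r ^ 3 * P₂ r) * (ρ r + P₂ r) / (r * (r - 2 * m₂ r)))
        = (m₂ r + 4 * π * r ^ 3 * P₂ r) * (ρ r + P₂ r) / (r * (r - 2 * m₂ r)) -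
          (m₁ r + 4 * π * r ^ 3 * P₂ r) * (ρ r + P₂ r) / (r * (r - 2 * m₁ r)) := by
      field_simp
      ring
    show (0:ℝ) ≤ K * (P₁ r - P₂ r) +
        (-(m₁ r + 4 * π * r ^ 3 * P₁ r) * (ρ r + P₁ r) / (r * (r - 2 * m₁ r)) -
          -(m₂ r + 4 * π * r ^ 3 * P₂ r) * (ρ r + P₂ r) / (r * (r - 2 * m₂ r)))
    linarith [step1, step3, identity]
  -- main argument by contradiction
  intro r₀ hr₀
  by_contra hlt
  push_neg at hlt
  have hur₀ : 0 < u r₀ := by simp [hu_def]; linarith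
  -- the first zero of u to the right of r₀
  set S : Set ℝ := {r | r ∈ Icc r₀ b ∧ u r = 0} with hS_def
  have hbS : b ∈ S := ⟨right_mem_Icc.2 hr₀.2, hub⟩
  have hSne : S.Nonempty := ⟨b, hbS⟩
  have hSbdd : BddBelow S := ⟨r₀, fun x hx => hx.1.1⟩
  have hSclosed : IsClosed S := by
    have : S = Icc r₀ b ∩ (Icc a b ∩ u ⁻¹' {0}) := by
      ext x
      constructor
      · rintro ⟨hx1, hx2⟩
        exact ⟨hx1, ⟨⟨le_trans hr₀.1 hx1.1, hx1.2⟩, hx2⟩⟩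
      · rintro ⟨hx1, _, hx3⟩
        exact ⟨hx1, hx3⟩
    rw [this]
    exact isClosed_Icc.inter (hu_cont.preimage_isClosed_of_isClosed isClosed_Icc
      isClosed_singleton)
  set r₁ : ℝ := sInf S with hr₁_def
  have hr₁S : r₁ ∈ S := hSclosed.csInf_mem hSne hSbdd
  have hr₁le : ∀ x ∈ S, r₁ ≤ x := fun x hx => csInf_le hSbdd hx
  have hr₀r₁ : r₀ < r₁ := by
    rcases lt_or_eq_of_le hr₁S.1.1 with h' | h'
    · exact h'
    · exfalso; rw [← h'] at hr₁S; have := hr₁S.2; linarith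
  have hr₁b : r₁ ≤ b := hr₁S.1.2
  have hr₁Icc : r₁ ∈ Icc a b := ⟨le_trans hr₀.1 hr₁S.1.1, hr₁b⟩
  have hsub : Icc r₀ r₁ ⊆ Icc a b := Icc_subset_Icc hr₀.1 hr₁b
  -- u is nonnegative on [r₀, r₁]
  have hu_nonneg : ∀ r ∈ Icc r₀ r₁, 0 ≤ u r := by
    intro r hr
    rcases eq_or_lt_of_le hr.2 with h' | h'
    · rw [h', hr₁S.2]
    by_contra hneg
    push_neg at hneg
    -- IVT gives a zero in [r₀, r], contradicting minimality of r₁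
    have hcont' : ContinuousOn u (Icc r₀ r) := hu_cont.mono (Icc_subset_Icc hr₀.1
      (le_trans hr.2 hr₁b))
    have h0mem : (0:ℝ) ∈ Icc (u r) (u r₀) := ⟨hneg.le, hur₀.le⟩
    have := intermediate_value_Icc' hr.1 hcont' h0mem
    obtain ⟨c, hc, hc0⟩ := this
    have hcS : c ∈ S := ⟨⟨hc.1, le_trans hc.2 (le_trans hr.2 hr₁b)⟩, hc0⟩
    have := hr₁le c hcS
    linarith [lt_of_le_of_lt hc.2 h']
  -- the auxiliary function g = exp(K r) * u r is monotone on [r₀, r₁]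
  set g : ℝ → ℝ := fun r => Real.exp (K * r) * u r with hg_def
  have hg_deriv : ∀ r ∈ Ioo r₀ r₁, HasDerivAt g
      (K * Real.exp (K * r) * u r + Real.exp (K * r) *
        (-(m₁ r + 4 * π * r ^ 3 * P₁ r) * (ρ r + P₁ r) / (r * (r - 2 * m₁ r)) -
          -(m₂ r + 4 * π * r ^ 3 * P₂ r) * (ρ r + P₂ r) / (r * (r - 2 * m₂ r)))) r := by
    intro r hr
    have hrab : r ∈ Ioo a b := ⟨lt_of_le_of_lt hr₀.1 hr.1, lt_of_lt_of_le hr.2 hr₁b⟩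
    have hexp : HasDerivAt (fun r => Real.exp (K * r)) (K * Real.exp (K * r)) r := by
      have := ((hasDerivAt_id r).const_mul K).exp
      simpa [mul_comm] using this
    have hu' : HasDerivAt u
        (-(m₁ r + 4 * π * r ^ 3 * P₁ r) * (ρ r + P₁ r) / (r * (r - 2 * m₁ r)) -
          -(m₂ r + 4 * π * r ^ 3 * P₂ r) * (ρ r + P₂ r) / (r * (r - 2 * m₂ r))) r :=
      (hTOV₁ r hrab).sub (hTOV₂ r hrab)
    exact hexp.mul hu'
  have hg_mono : MonotoneOn g (Icc r₀ r₁) := by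
    apply monotoneOn_of_deriv_nonneg (convex_Icc r₀ r₁)
    · exact ((Real.continuous_exp.comp (continuous_const.mul continuous_id)).continuousOn).mul
        (hu_cont.mono hsub)
    · intro x hx
      rw [interior_Icc] at hx
      exact (hg_deriv x hx).differentiableAt.differentiableWithinAt
    · intro x hx
      rw [interior_Icc] at hx
      rw [(hg_deriv x hx).deriv]
      have hxab : x ∈ Ioo a b := ⟨lt_of_le_of_lt hr₀.1 hx.1, lt_of_lt_of_le hx.2 hr₁b⟩
      have hux : 0 ≤ u x := hu_nonneg x ⟨hx.1.le, hx.2.le⟩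
      have hkey := key x hxab hux
      have hexp_pos : 0 < Real.exp (K * x) := Real.exp_pos _
      nlinarith [hkey, hexp_pos]
  have h1 : g r₀ ≤ g r₁ := hg_mono (left_mem_Icc.2 hr₀r₁.le) (right_mem_Icc.2 hr₀r₁.le) hr₀r₁.le
  have h2 : g r₁ = 0 := by simp [hg_def, hr₁S.2]
  have h3 : 0 < g r₀ := mul_pos (Real.exp_pos _) hur₀
  linarith
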